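/- Let p be a prime and let G be a finitely generated indecomposable group such that G/Z(G) ≅ C_p × C_p and Z(G) is cyclic. Then there exist x, y, t₁ ∈ G and an integer m₁ ≥ 1 such that G is generated by {x, y, t₁}, Z(G) = ⟨t₁⟩, t₁ has order p^{m₁}, [x,y] = t₁^{p^{m₁−1}}, and either x^p = 1 and y^p = 1 (so G belongs to family 𝒢₁), or x^p = t₁ and y^p = t₁ (so G belongs to family 𝒢₂). -/

import Mathlib

open scoped commutatorElement

section Helpers
variable {G : Type*} [Group G]

lemma central_collect (c : G) (hc : ∀ k : G, k * c = c * k) (a b : G) :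
    a * c * b = a * b * c := by rw [mul_assoc, ← hc b, ← mul_assoc]

variable (hz : ∀ g h k : G, k * ⁅g,h⁆ = ⁅g,h⁆ * k)

include hz

lemma comm_mul_left (u v w : G) : ⁅u*v, w⁆ = ⁅u,w⁆ * ⁅v,w⁆ := by
  have h1 : ⁅u*v,w⁆ = u * ⁅v,w⁆ * (w * u⁻¹ * w⁻¹) := by
    rw [commutatorElement_def, commutatorElement_def]; group
  rw [h1, hz v w u, mul_assoc, mul_assoc,
    show u * (w * (u⁻¹ * w⁻¹)) = ⁅u,w⁆ by rw [commutatorElement_def]; group,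
    hz u w ⁅v,w⁆]

lemma comm_inv_left (u w : G) : ⁅u⁻¹, w⁆ = ⁅u,w⁆⁻¹ := by
  have h1 : ⁅u⁻¹ * u, w⁆ = ⁅u⁻¹,w⁆ * ⁅u,w⁆ := comm_mul_left hz u⁻¹ u w
  rw [inv_mul_cancel, commutatorElement_one_left] at h1
  exact (eq_inv_of_mul_eq_one_left h1.symm)

lemma comm_mul_right (u v w : G) : ⁅w, u*v⁆ = ⁅w,u⁆ * ⁅w,v⁆ := by
  rw [← commutatorElement_inv (u*v) w, comm_mul_left hz, mul_inv_rev,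
    commutatorElement_inv, commutatorElement_inv]
  exact hz w u ⁅w,v⁆

lemma comm_inv_right (u w : G) : ⁅w, u⁻¹⁆ = ⁅w,u⁆⁻¹ := by
  rw [← commutatorElement_inv u⁻¹ w, comm_inv_left hz]
  rw [inv_inv]
  exact (commutatorElement_inv w u).symm

lemma comm_pow_left (u w : G) (n : ℕ) : ⁅u^n, w⁆ = ⁅u,w⁆^n := by
  induction n with
  | zero => simp
  | succ k ih => rw [pow_succ, comm_mul_left hz, ih, pow_succ]

lemma comm_pow_right (u w : G) (n : ℕ) : ⁅w, u^n⁆ = ⁅w,u⁆^n := by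
  induction n with
  | zero => simp
  | succ k ih => rw [pow_succ, comm_mul_right hz, ih, pow_succ]

lemma comm_inv_inv (u w : G) : ⁅u⁻¹, w⁻¹⁆ = ⁅u, w⁆ := by
  rw [comm_inv_left hz, comm_inv_right hz, inv_inv]

lemma pow_mul_swap (u v : G) (n : ℕ) : v^n * u = u * v^n * ⁅v,u⁆^n := by
  rw [← comm_pow_left hz v u n]
  rw [hz (v^n) u (u * v^n), commutatorElement_def]; group

/-- class-2 power formula -/
lemma mul_pow_central (u v : G) (n : ℕ) :
    (u * v)^n = u^n * v^n * ⁅v,u⁆^(n.choose 2) := by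
  have hcc : ∀ (m : ℕ) (k : G), k * ⁅v,u⁆^m = ⁅v,u⁆^m * k := by
    intro m k
    exact (Commute.pow_right (hz v u k) m)
  set z := ⁅v,u⁆ with hzdef
  induction n with
  | zero => simp
  | succ k ih =>
    rw [pow_succ, ih]
    calc u^k * v^k * z^(k.choose 2) * (u*v)
        = u^k * v^k * (u * v) * z^(k.choose 2) :=
          central_collect _ (hcc _) _ _
      _ = u^k * (v^k * u) * v * z^(k.choose 2) := by group
      _ = u^k * (u * v^k * z^k) * v * z^(k.choose 2) := by
          rw [pow_mul_swap hz u v k]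
      _ = u^k * (u * v^k) * z^k * v * z^(k.choose 2) := by group
      _ = u^k * (u * v^k) * v * z^k * z^(k.choose 2) := by
          rw [central_collect _ (hcc k) (u^k * (u * v^k)) v]
      _ = u^(k+1) * v^(k+1) * (z^k * z^(k.choose 2)) := by group
      _ = u^(k+1) * v^(k+1) * z^((k+1).choose 2) := by
          rw [← pow_add]
          congr 1
          rw [Nat.choose_succ_succ, Nat.choose_one_right]

end Helpers

section Steps
variable {G : Type*} [Group G]

/-- Invariant maintained during the normalization of generators. -/
def GoodPair (p m : ℕ) (t₁ x y : G) (A B : ℤ) : Prop :=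
  Subgroup.closure {x, y} ⊔ Subgroup.center G = ⊤ ∧
  ⁅x, y⁆ = t₁ ^ (p ^ (m - 1)) ∧
  x ^ p = t₁ ^ A ∧ y ^ p = t₁ ^ B

variable {p m : ℕ} {t₁ : G}
variable (hz : ∀ g h k : G, k * ⁅g,h⁆ = ⁅g,h⁆ * k)
variable (htc : t₁ ∈ Subgroup.center G)

include hz htc

lemma good_op1 {x y : G} {A B : ℤ} (h : GoodPair p m t₁ x y A B) (j : ℕ) (e : ℤ) :
    GoodPair p m t₁ (x * (y ^ j * t₁ ^ e)) y
      (A + j * B + e * p - j * ((p:ℤ) ^ (m-1) * (p.choose 2))) B := by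
  obtain ⟨hgen, hxy, hxp, hyp⟩ := h
  have ht : ∀ k : G, k * t₁ = t₁ * k := Subgroup.mem_center_iff.mp htc
  have hcy : Commute y t₁ := ht y
  have hcx : Commute x t₁ := ht x
  refine ⟨?_, ?_, ?_, hyp⟩
  · rw [eq_top_iff, ← hgen]
    refine sup_le ?_ le_sup_right
    rw [Subgroup.closure_le]
    intro g hg
    have hyH : y ∈ Subgroup.closure {x * (y ^ j * t₁ ^ e), y} ⊔ Subgroup.center G :=
      le_sup_left (α := Subgroup G) (Subgroup.subset_closure (by simp))
    have hnH : x * (y ^ j * t₁ ^ e) ∈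
        Subgroup.closure {x * (y ^ j * t₁ ^ e), y} ⊔ Subgroup.center G :=
      le_sup_left (α := Subgroup G) (Subgroup.subset_closure (by simp))
    have htH : t₁ ∈ Subgroup.closure {x * (y ^ j * t₁ ^ e), y} ⊔ Subgroup.center G :=
      le_sup_right (α := Subgroup G) htc
    have hxH : x ∈ Subgroup.closure {x * (y ^ j * t₁ ^ e), y} ⊔ Subgroup.center G := by
      have hmem := mul_mem (mul_mem hnH (inv_mem (zpow_mem htH e))) (inv_mem (pow_mem hyH j))
      simpa [mul_assoc] using hmem
    rcases hg with rfl | hg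
    · exact hxH
    · rcases hg with rfl; exact hyH
  · rw [comm_mul_left hz, comm_mul_left hz, comm_pow_left hz, commutatorElement_self,
      one_pow, (hcy.symm.zpow_left e).commutator_eq, one_mul, mul_one, hxy]
  · rw [mul_pow_central hz]
    have h1 : (y ^ j * t₁ ^ e) ^ p = t₁ ^ (j * B + e * p) := by
      rw [((hcy.pow_left j).zpow_right e).mul_pow, ← pow_mul, mul_comm j p, pow_mul, hyp,
        ← zpow_natCast (t₁ ^ B), ← zpow_mul, ← zpow_natCast (t₁ ^ e), ← zpow_mul, ← zpow_add]
      ring_nf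
    have h2 : ⁅y ^ j * t₁ ^ e, x⁆ = t₁ ^ (-(j * ((p:ℤ) ^ (m-1)))) := by
      rw [comm_mul_left hz, (hcx.symm.zpow_left e).commutator_eq, mul_one,
        comm_pow_left hz, ← commutatorElement_inv, hxy, ← zpow_natCast t₁ (p ^ (m-1)),
        ← zpow_neg, ← zpow_natCast (t₁ ^ (-((p ^ (m-1) : ℕ) : ℤ))), ← zpow_mul]
      push_cast
      ring_nf
    rw [hxp, h1, h2, ← zpow_natCast (t₁ ^ (-(j * ((p:ℤ) ^ (m-1))))), ← zpow_mul,
      ← zpow_add, ← zpow_add]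
    congr 1
    push_cast
    ring

lemma good_op2 {x y : G} {A B : ℤ} (h : GoodPair p m t₁ x y A B) (i : ℕ) (e : ℤ) :
    GoodPair p m t₁ x (y * (x ^ i * t₁ ^ e))
      A (B + i * A + e * p + i * ((p:ℤ) ^ (m-1) * (p.choose 2))) := by
  obtain ⟨hgen, hxy, hxp, hyp⟩ := h
  have ht : ∀ k : G, k * t₁ = t₁ * k := Subgroup.mem_center_iff.mp htc
  have hcy : Commute y t₁ := ht y
  have hcx : Commute x t₁ := ht x
  refine ⟨?_, ?_, hxp, ?_⟩
  · rw [eq_top_iff, ← hgen]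
    refine sup_le ?_ le_sup_right
    rw [Subgroup.closure_le]
    intro g hg
    have hxH : x ∈ Subgroup.closure {x, y * (x ^ i * t₁ ^ e)} ⊔ Subgroup.center G :=
      le_sup_left (α := Subgroup G) (Subgroup.subset_closure (by simp))
    have hnH : y * (x ^ i * t₁ ^ e) ∈
        Subgroup.closure {x, y * (x ^ i * t₁ ^ e)} ⊔ Subgroup.center G :=
      le_sup_left (α := Subgroup G) (Subgroup.subset_closure (by simp))
    have htH : t₁ ∈ Subgroup.closure {x, y * (x ^ i * t₁ ^ e)} ⊔ Subgroup.center G :=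
      le_sup_right (α := Subgroup G) htc
    have hyH : y ∈ Subgroup.closure {x, y * (x ^ i * t₁ ^ e)} ⊔ Subgroup.center G := by
      have hmem := mul_mem (mul_mem hnH (inv_mem (zpow_mem htH e))) (inv_mem (pow_mem hxH i))
      simpa [mul_assoc] using hmem
    rcases hg with rfl | hg
    · exact hxH
    · rcases hg with rfl; exact hyH
  · rw [comm_mul_right hz, comm_mul_right hz, comm_pow_right hz, commutatorElement_self,
      one_pow, (hcx.zpow_right e).commutator_eq, one_mul, mul_one, hxy]
  · rw [mul_pow_central hz]
    have h1 : (x ^ i * t₁ ^ e) ^ p = t₁ ^ (i * A + e * p) := by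
      rw [((hcx.pow_left i).zpow_right e).mul_pow, ← pow_mul, mul_comm i p, pow_mul, hxp,
        ← zpow_natCast (t₁ ^ A), ← zpow_mul, ← zpow_natCast (t₁ ^ e), ← zpow_mul, ← zpow_add]
      ring_nf
    have h2 : ⁅x ^ i * t₁ ^ e, y⁆ = t₁ ^ ((i : ℤ) * ((p ^ (m-1) : ℕ) : ℤ)) := by
      rw [comm_mul_left hz, (hcy.symm.zpow_left e).commutator_eq, mul_one,
        comm_pow_left hz, hxy, ← zpow_natCast t₁ (p ^ (m-1)),
        ← zpow_natCast (t₁ ^ (((p ^ (m-1) : ℕ) : ℤ))), ← zpow_mul]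
      ring_nf
    rw [hyp, h1, h2, ← zpow_natCast (t₁ ^ ((i : ℤ) * ((p ^ (m-1) : ℕ) : ℤ))), ← zpow_mul,
      ← zpow_add, ← zpow_add]
    congr 1
    push_cast
    ring

lemma good_op3 {x y : G} {A B : ℤ} (h : GoodPair p m t₁ x y A B) :
    GoodPair p m t₁ y⁻¹ x (-B) A := by
  obtain ⟨hgen, hxy, hxp, hyp⟩ := h
  refine ⟨?_, ?_, ?_, hxp⟩
  · rw [eq_top_iff, ← hgen]
    refine sup_le ?_ le_sup_right
    rw [Subgroup.closure_le]
    intro g hg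
    have hxH : x ∈ Subgroup.closure {y⁻¹, x} ⊔ Subgroup.center G :=
      le_sup_left (α := Subgroup G) (Subgroup.subset_closure (by simp))
    have hyH : y ∈ Subgroup.closure {y⁻¹, x} ⊔ Subgroup.center G := by
      have : y⁻¹ ∈ Subgroup.closure {y⁻¹, x} ⊔ Subgroup.center G :=
        le_sup_left (α := Subgroup G) (Subgroup.subset_closure (by simp))
      simpa using inv_mem this
    rcases hg with rfl | hg
    · exact hxH
    · rcases hg with rfl; exact hyH
  · rw [comm_inv_left hz, commutatorElement_inv, hxy]
  · rw [inv_pow, hyp, ← zpow_neg]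

end Steps

lemma zmod_two_cases {p : ℕ} (h : p = 2) (z : ZMod p) : z = 0 ∨ z = 1 := by
  subst h; revert z; decide

lemma zmod_two_neg {p : ℕ} (h : p = 2) (z : ZMod p) : -z = z := by
  subst h; revert z; decide

/-- A group is indecomposable if whenever it is the internal direct product of two
subgroups `H` and `K`, one of them is trivial. -/
def IsIndecomposable (G : Type*) [Group G] : Prop :=
  ∀ H K : Subgroup G,
    (∀ h ∈ H, ∀ k ∈ K, Commute h k) →
    H ⊓ K = ⊥ →
    (∀ g : G, ∃ h ∈ H, ∃ k ∈ K, g = h * k) →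
    H = ⊥ ∨ K = ⊥

theorem rank_one_classification (p : ℕ) (hp : p.Prime) (G : Type*) [Group G]
    (hfg : Group.FG G)
    (hind : IsIndecomposable G)
    (hq : Nonempty ((G ⧸ Subgroup.center G) ≃*
      Multiplicative (ZMod p) × Multiplicative (ZMod p)))
    (hcyc : ∃ c : G, Subgroup.center G = Subgroup.zpowers c) :
    ∃ (x y t₁ : G) (m₁ : ℕ), 1 ≤ m₁ ∧
      Subgroup.closure {x, y, t₁} = ⊤ ∧
      Subgroup.center G = Subgroup.zpowers t₁ ∧
      orderOf t₁ = p ^ m₁ ∧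
      x⁻¹ * y⁻¹ * x * y = t₁ ^ p ^ (m₁ - 1) ∧
      ((x ^ p = 1 ∧ y ^ p = 1) ∨ (x ^ p = t₁ ∧ y ^ p = t₁)) := by
  obtain ⟨φ⟩ := hq
  obtain ⟨c, hc⟩ := hcyc
  haveI : Fact p.Prime := ⟨hp⟩
  haveI : NeZero p := ⟨hp.pos.ne'⟩
  set mk : G →* G ⧸ Subgroup.center G := QuotientGroup.mk' (Subgroup.center G) with hmk
  -- exponent p in the target group
  have hexp1 : ∀ v : Multiplicative (ZMod p), v ^ p = 1 := by
    intro v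
    rw [← ofAdd_toAdd v, ← ofAdd_nsmul]
    simp [nsmul_eq_mul, ZMod.natCast_self]
  have hexp : ∀ u : Multiplicative (ZMod p) × Multiplicative (ZMod p), u ^ p = 1 := by
    intro u
    refine Prod.ext ?_ ?_ <;> simp [Prod.pow_fst, Prod.pow_snd, hexp1]
  -- commutators are central
  have hzc : ∀ g h : G, ⁅g, h⁆ ∈ Subgroup.center G := by
    intro g h
    rw [← QuotientGroup.eq_one_iff (N := Subgroup.center G)]
    have h2 : mk ⁅g, h⁆ = ⁅mk g, mk h⁆ := map_commutatorElement mk g h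
    have h1 : φ (mk ⁅g, h⁆) = 1 := by
      rw [h2, map_commutatorElement]
      exact commutatorElement_eq_one_iff_mul_comm.mpr (mul_comm _ _)
    have := φ.injective (by rw [h1, map_one] : φ (mk ⁅g, h⁆) = φ 1)
    exact this
  have hz : ∀ g h k : G, k * ⁅g,h⁆ = ⁅g,h⁆ * k :=
    fun g h k => Subgroup.mem_center_iff.mp (hzc g h) k
  -- p-th powers are central
  have hpow : ∀ g : G, g ^ p ∈ Subgroup.center G := by
    intro g
    rw [← QuotientGroup.eq_one_iff (N := Subgroup.center G)]
    have h1 : φ (mk (g ^ p)) = 1 := by rw [map_pow, map_pow, hexp]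
    exact φ.injective (by rw [map_one]; exact h1)
  -- choose generators
  set g₀ : Multiplicative (ZMod p) := Multiplicative.ofAdd 1 with hg₀
  obtain ⟨a, ha⟩ := QuotientGroup.mk'_surjective (Subgroup.center G) (φ.symm (g₀, 1))
  obtain ⟨b, hb⟩ := QuotientGroup.mk'_surjective (Subgroup.center G) (φ.symm (1, g₀))
  have hag : φ (mk a) = (g₀, 1) := by rw [hmk, ha, MulEquiv.apply_symm_apply]
  have hbg : φ (mk b) = (1, g₀) := by rw [hmk, hb, MulEquiv.apply_symm_apply]
  have hg₀pow : ∀ u : Multiplicative (ZMod p), g₀ ^ (ZMod.val (Multiplicative.toAdd u)) = u := by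
    intro u
    rw [hg₀, ← ofAdd_nsmul]
    rw [nsmul_eq_mul, mul_one]
    rw [ZMod.natCast_rightInverse _]
    exact ofAdd_toAdd u
  -- the images of a and b generate the quotient
  have htopQ : Subgroup.closure {mk a, mk b} = ⊤ := by
    rw [eq_top_iff]
    intro q _
    set u := (φ q).1 with hu
    set w := (φ q).2 with hw
    have hq' : q = (mk a) ^ (ZMod.val (Multiplicative.toAdd u)) *
        (mk b) ^ (ZMod.val (Multiplicative.toAdd w)) := by
      apply φ.injective
      rw [map_mul, map_pow, map_pow, hag, hbg, Prod.pow_mk, Prod.pow_mk, Prod.mk_mul_mk,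
        one_pow, one_pow, mul_one, one_mul, hg₀pow, hg₀pow]
    rw [hq']
    exact mul_mem (pow_mem (Subgroup.subset_closure (by simp)) _)
      (pow_mem (Subgroup.subset_closure (by simp)) _)
  -- a, b and the center generate G
  have htopG : Subgroup.closure {a, b} ⊔ Subgroup.center G = ⊤ := by
    have hmap : Subgroup.map mk (Subgroup.closure {a, b}) = ⊤ := by
      rw [MonoidHom.map_closure]
      rw [show mk '' {a, b} = {mk a, mk b} by rw [Set.image_insert_eq, Set.image_singleton]]
      exact htopQ
    have hcm := Subgroup.comap_map_eq mk (Subgroup.closure {a, b})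
    rw [hmap, Subgroup.comap_top] at hcm
    rw [hmk, QuotientGroup.ker_mk'] at hcm
    exact hcm.symm
  -- the commutator of a and b is nontrivial
  have hab : ⁅a, b⁆ ≠ 1 := by
    intro habs
    have hcomm_ab : a * b = b * a := commutatorElement_eq_one_iff_mul_comm.mp habs
    have hT : Subgroup.closure {a, b} ⊔ Subgroup.center G ≤ Subgroup.centralizer {a, b} := by
      refine sup_le ?_ ?_
      · rw [Subgroup.closure_le]
        intro g hg
        simp only [SetLike.mem_coe]
        rw [Subgroup.mem_centralizer_iff]
        intro h hh
        rcases hh with rfl | hh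
        · rcases hg with rfl | hg
          · rfl
          · rcases hg with rfl; exact hcomm_ab
        · rcases hh with rfl
          rcases hg with rfl | hg
          · exact hcomm_ab.symm
          · rcases hg with rfl; rfl
      · intro z hzz
        rw [Subgroup.mem_centralizer_iff]
        intro h _
        exact Subgroup.mem_center_iff.mp hzz h
    rw [htopG] at hT
    have haC : a ∈ Subgroup.center G := by
      rw [Subgroup.mem_center_iff]
      intro g
      exact (Subgroup.mem_centralizer_iff.mp (hT (Subgroup.mem_top g)) a (by simp)).symm
    have : mk a = 1 := (QuotientGroup.eq_one_iff a).mpr haC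
    rw [hmk] at this
    rw [ha] at this
    have h1 : ((g₀, 1) : Multiplicative (ZMod p) × Multiplicative (ZMod p)) = 1 := by
      have := congrArg φ this
      rwa [MulEquiv.apply_symm_apply, map_one] at this
    have : g₀ = 1 := congrArg Prod.fst h1
    rw [hg₀] at this
    have : (1 : ZMod p) = 0 := this
    exact one_ne_zero this
  -- the commutator has order dividing p, and lies in ⟨c⟩
  obtain ⟨k, hk⟩ := Subgroup.mem_zpowers_iff.mp (hc ▸ hzc a b)
  have habp : ⁅a, b⁆ ^ p = 1 := by
    rw [← comm_pow_right hz b a p]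
    exact Commute.commutator_eq (Subgroup.mem_center_iff.mp (hpow b) a)
  have hk0 : k ≠ 0 := by
    intro h
    apply hab
    rw [← hk, h, zpow_zero]
  have hckp : c ^ (k * p) = 1 := by
    rw [zpow_mul, hk, zpow_natCast, habp]
  have hdvd_kp : (orderOf c : ℤ) ∣ k * p := orderOf_dvd_iff_zpow_eq_one.mpr hckp
  have hnc0 : orderOf c ≠ 0 := by
    intro h0
    rw [h0] at hdvd_kp
    norm_num at hdvd_kp
    rcases hdvd_kp with h | h
    · exact hk0 h
    · exact hp.ne_zero (by exact_mod_cast h)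
  have hfinc : IsOfFinOrder c := by
    rw [← orderOf_pos_iff]
    exact Nat.pos_of_ne_zero hnc0
  haveI hfinZ : Finite (Subgroup.center G) := by
    rw [hc]
    exact Set.finite_coe_iff.mpr hfinc.finite_zpowers
  haveI hfinQ : Finite (G ⧸ Subgroup.center G) := Finite.of_equiv _ φ.symm.toEquiv
  haveI hfinG : Finite G := Finite.of_equiv _
    (Subgroup.groupEquivQuotientProdSubgroup (s := Subgroup.center G)).symm
  -- cardinalities
  have hcardQ : Nat.card (G ⧸ Subgroup.center G) = p * p := by
    rw [Nat.card_congr φ.toEquiv, Nat.card_prod]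
    show Nat.card (ZMod p) * Nat.card (ZMod p) = p * p
    rw [Nat.card_zmod]
  have hcardZ : Nat.card (Subgroup.center G) = orderOf c := by
    rw [hc, Nat.card_zpowers]
  have hcardG : Nat.card G = p * p * orderOf c := by
    rw [Subgroup.card_eq_card_quotient_mul_card_subgroup (Subgroup.center G), hcardQ, hcardZ]
  -- p divides the order of c
  have habo : orderOf ⁅a, b⁆ = p := orderOf_eq_prime (by rw [habp]) hab
  have habdvd : orderOf ⁅a, b⁆ ∣ orderOf c := by
    apply orderOf_dvd_of_pow_eq_one
    rw [← hk, ← zpow_natCast, ← zpow_mul, mul_comm, zpow_mul, zpow_natCast,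
      pow_orderOf_eq_one, one_zpow]
  have hpdvd : p ∣ orderOf c := habo ▸ habdvd
  set n := orderOf c with hn
  set m := n.factorization p with hmdef
  have hm1 : 1 ≤ m := hp.factorization_pos_of_dvd hnc0 hpdvd
  set q := n / p ^ m with hqdef
  have hnq : p ^ m * q = n := Nat.ordProj_mul_ordCompl_eq_self n p
  have hqnd : ¬ p ∣ q := Nat.not_dvd_ordCompl hp hnc0
  have hq0 : q ≠ 0 := by
    intro h; rw [h, mul_zero] at hnq; exact hnc0 hnq.symm
  -- the q-part of the center
  set Q : Subgroup G := Subgroup.zpowers (c ^ (p ^ m)) with hQdef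
  have hcmem : c ∈ Subgroup.center G := hc ▸ Subgroup.mem_zpowers c
  have hQle : Q ≤ Subgroup.center G := Subgroup.zpowers_le.mpr (pow_mem hcmem _)
  have hcardQ' : Nat.card Q = q := by
    rw [hQdef, Nat.card_zpowers, orderOf_pow, ← hn, Nat.gcd_eq_right (Nat.ordProj_dvd n p)]
  obtain ⟨P⟩ := (inferInstance : Nonempty (Sylow p G))
  have hG2 : Nat.card G = p ^ (m + 2) * q := by
    rw [hcardG, ← hnq]; ring
  have hfact : (Nat.card G).factorization p = m + 2 := by
    rw [hG2, Nat.factorization_mul (pow_ne_zero _ hp.ne_zero) hq0]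
    rw [Finsupp.add_apply, hp.factorization_pow, Finsupp.single_eq_same,
      Nat.factorization_eq_zero_of_not_dvd hqnd]
  have hcardP : Nat.card P = p ^ (m + 2) := by
    rw [P.card_eq_multiplicity, hfact]
  have hPindex : P.toSubgroup.index = q := by
    have h := Subgroup.card_mul_index P.toSubgroup
    rw [hcardP, hG2] at h
    exact Nat.eq_of_mul_eq_mul_left (pow_pos hp.pos _) h
  have hQindex : Q.index = p ^ (m + 2) := by
    have h := Subgroup.card_mul_index Q
    rw [hcardQ', hG2, mul_comm (p ^ (m+2)) q] at h
    exact Nat.eq_of_mul_eq_mul_left (Nat.pos_of_ne_zero hq0) h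
  have hcop : Nat.Coprime (p ^ (m + 2)) q :=
    Nat.Coprime.pow_left _ ((Nat.Prime.coprime_iff_not_dvd hp).mpr hqnd)
  have hsup : P.toSubgroup ⊔ Q = ⊤ := by
    rw [← Subgroup.index_eq_one]
    have h1 : (P.toSubgroup ⊔ Q).index ∣ q := by
      rw [← hPindex]; exact Subgroup.index_dvd_of_le le_sup_left
    have h2 : (P.toSubgroup ⊔ Q).index ∣ p ^ (m + 2) := by
      rw [← hQindex]; exact Subgroup.index_dvd_of_le le_sup_right
    exact Nat.eq_one_of_dvd_one ((hcop : Nat.gcd _ _ = 1) ▸ Nat.dvd_gcd h2 h1)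
  haveI hQnormal : Q.Normal := by
    constructor
    intro q' hq' g
    have h := Subgroup.mem_center_iff.mp (hQle hq') g
    rw [h, mul_assoc, mul_inv_cancel, mul_one]
    exact hq'
  have hdecomp : ∀ g : G, ∃ h ∈ P.toSubgroup, ∃ k ∈ Q, g = h * k := by
    intro g
    have hg : g ∈ (↑(P.toSubgroup ⊔ Q) : Set G) := by rw [hsup]; trivial
    rw [Subgroup.mul_normal] at hg
    obtain ⟨h, hh, k, hk, hhk⟩ := hg
    exact ⟨h, hh, k, hk, hhk.symm⟩
  have hcommPQ : ∀ h ∈ P.toSubgroup, ∀ k ∈ Q, Commute h k :=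
    fun h _ k hk => Subgroup.mem_center_iff.mp (hQle hk) h
  have hinf : P.toSubgroup ⊓ Q = ⊥ :=
    Subgroup.inf_eq_bot_of_coprime (by rw [hcardP, hcardQ']; exact hcop)
  have hnpm : n = p ^ m := by
    rcases hind P.toSubgroup Q hcommPQ hinf hdecomp with hP | hQ
    · exfalso
      have := Subgroup.card_bot (G := G)
      rw [← hP, hcardP] at this
      exact Nat.Prime.one_lt hp |>.ne' (by
        have h2 : p ∣ p ^ (m + 2) := dvd_pow_self p (by omega)
        rw [this] at h2
        exact (Nat.dvd_one.mp h2))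
    · have hc1 : c ^ (p ^ m) = 1 := by
        have : c ^ (p ^ m) ∈ Q := Subgroup.mem_zpowers _
        rw [hQ] at this
        exact Subgroup.mem_bot.mp this
      exact Nat.dvd_antisymm (orderOf_dvd_of_pow_eq_one hc1) (Nat.ordProj_dvd n p)
  -- construct the generator t₁ of the center
  have horderc : orderOf c = p ^ m := hn ▸ hnpm
  have hcpm : c ^ ((p : ℤ) ^ m) = 1 := by
    have h1 : c ^ ((p ^ m : ℕ) : ℤ) = 1 := by
      rw [zpow_natCast, ← horderc, pow_orderOf_eq_one]
    rwa [Nat.cast_pow] at h1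
  have hdvd_kp' : ((p:ℤ) ^ (m - 1) * p) ∣ k * p := by
    have : (p:ℤ) ^ (m - 1) * p = (p:ℤ) ^ m := by
      rw [← pow_succ]; congr 1; omega
    rw [this]
    have h2 : ((p ^ m : ℕ) : ℤ) ∣ k * p := by
      rw [← hnpm]; exact hdvd_kp
    rwa [Nat.cast_pow] at h2
  have hdvk : ((p:ℤ) ^ (m - 1)) ∣ k :=
    (mul_dvd_mul_iff_right (by exact_mod_cast hp.ne_zero : (p:ℤ) ≠ 0)).mp hdvd_kp'
  obtain ⟨v, hv⟩ := hdvk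
  have hpv : ¬ (p:ℤ) ∣ v := by
    intro ⟨w, hw⟩
    apply hab
    rw [← hk, hv, hw]
    have hmm : m - 1 + 1 = m := by omega
    have : (p:ℤ) ^ (m - 1) * ((p:ℤ) * w) = (p:ℤ) ^ m * w := by
      rw [← mul_assoc, ← pow_succ, hmm]
    rw [this, zpow_mul, hcpm, one_zpow]
  have hp_int : Prime (p : ℤ) := Nat.prime_iff_prime_int.mp hp
  have hcop2 : IsCoprime ((p:ℤ) ^ m) v :=
    IsCoprime.pow_left ((hp_int.coprime_iff_not_dvd).mpr hpv)
  set t₁ : G := c ^ v with ht₁def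
  have hzt : Subgroup.zpowers t₁ = Subgroup.zpowers c := by
    apply le_antisymm
    · exact Subgroup.zpowers_le.mpr ⟨v, rfl⟩
    · apply Subgroup.zpowers_le.mpr
      obtain ⟨r, s, hrs⟩ := hcop2
      refine ⟨s, ?_⟩
      have : c = c ^ (r * (p:ℤ) ^ m + s * v) := by rw [hrs, zpow_one]
      rw [this, zpow_add, mul_comm r, zpow_mul, hcpm, one_zpow, one_mul,
        mul_comm s, zpow_mul]
  have hcent_t : Subgroup.center G = Subgroup.zpowers t₁ := hc.trans hzt.symm
  have horder_t : orderOf t₁ = p ^ m := by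
    rw [← Nat.card_zpowers, hzt, Nat.card_zpowers, horderc]
  have htc : t₁ ∈ Subgroup.center G := hcent_t ▸ Subgroup.mem_zpowers t₁
  have ht1pow : t₁ ^ (p ^ (m - 1)) = ⁅a, b⁆ := by
    rw [← hk, hv, ht₁def, ← zpow_natCast (c ^ v), ← zpow_mul]
    congr 1
    push_cast
    ring
  obtain ⟨A₀, hA₀⟩ := Subgroup.mem_zpowers_iff.mp (hcent_t ▸ hpow a)
  obtain ⟨B₀, hB₀⟩ := Subgroup.mem_zpowers_iff.mp (hcent_t ▸ hpow b)
  have hGP0 : GoodPair p m t₁ a b A₀ B₀ := ⟨htopG, by rw [ht1pow], hA₀.symm, hB₀.symm⟩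
  -- the normalization game
  set ε : ZMod p := (((p:ℤ) ^ (m - 1) * (p.choose 2) : ℤ) : ZMod p) with hε
  have hε01 : ε = 0 ∨ p = 2 := by
    by_cases h2 : p = 2
    · right; exact h2
    · left
      rw [hε, ZMod.intCast_zmod_eq_zero_iff_dvd]
      have : p ∣ p.choose 2 := hp.dvd_choose_self (by omega) (by
        have := hp.two_le; omega)
      exact Dvd.dvd.mul_left (Int.natCast_dvd_natCast.mpr this) _
  have hnegeps : -ε = ε := by
    rcases hε01 with h | h
    · rw [h, neg_zero]
    · exact zmod_two_neg h ε
  -- generic finishing move: adjust exact central parts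
  have finalize : ∀ (x y : G) (A B CA CB : ℤ), GoodPair p m t₁ x y A B →
      ((A : ZMod p)) = ((CA : ℤ) : ZMod p) → ((B : ZMod p)) = ((CB : ℤ) : ZMod p) →
      ∃ x' y', GoodPair p m t₁ x' y' CA CB := by
    intro x y A B CA CB hGP hA hB
    have hdvdA : (p:ℤ) ∣ (CA - A) := by
      rw [← ZMod.intCast_zmod_eq_zero_iff_dvd]
      push_cast
      rw [hA]; ring
    have heA : (CA - A) / p * p = CA - A := Int.ediv_mul_cancel hdvdA
    have h1 := good_op1 hz htc hGP 0 ((CA - A) / p)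
    have hEqA : A + ((0:ℕ):ℤ) * B + (CA - A) / p * (p:ℤ)
        - ((0:ℕ):ℤ) * ((p:ℤ) ^ (m-1) * (p.choose 2)) = CA := by
      rw [heA]; push_cast; ring
    rw [hEqA] at h1
    have hdvdB : (p:ℤ) ∣ (CB - B) := by
      rw [← ZMod.intCast_zmod_eq_zero_iff_dvd]
      push_cast
      rw [hB]; ring
    have heB : (CB - B) / p * p = CB - B := Int.ediv_mul_cancel hdvdB
    have h2 := good_op2 hz htc h1 0 ((CB - B) / p)
    have hEqB : B + ((0:ℕ):ℤ) * CA + (CB - B) / p * (p:ℤ)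
        + ((0:ℕ):ℤ) * ((p:ℤ) ^ (m-1) * (p.choose 2)) = CB := by
      rw [heB]; push_cast; ring
    rw [hEqB] at h2
    exact ⟨_, _, h2⟩
  have hεval : ε = (p : ZMod p) ^ (m-1) * ((p.choose 2 : ℕ) : ZMod p) := by
    rw [hε]; push_cast; ring
  -- steering to (1 - ε, 1 + ε)
  have steer : ∀ (x y : G) (A B : ℤ), GoodPair p m t₁ x y A B →
      ((B : ZMod p) - ε ≠ 0) →
      ∃ x' y' A' B', GoodPair p m t₁ x' y' A' B' ∧
        ((A' : ZMod p)) = 1 - ε ∧ ((B' : ZMod p)) = 1 + ε := by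
    intro x y A B hGP hBne
    set jz : ZMod p := (1 - ((A : ZMod p) + ε)) * ((B : ZMod p) - ε)⁻¹ with hjz
    have hjval : ((jz.val : ℕ) : ZMod p) = jz := ZMod.natCast_rightInverse jz
    have hGP1 := good_op1 hz htc hGP jz.val 0
    have hkey : jz * ((B : ZMod p) - ε) = 1 - ((A : ZMod p) + ε) := by
      rw [hjz, mul_assoc, inv_mul_cancel₀ hBne, mul_one]
    have hA1 : ((A + (jz.val : ℤ) * B + 0 * (p:ℤ)
        - (jz.val : ℤ) * ((p:ℤ) ^ (m-1) * (p.choose 2)) : ℤ) : ZMod p) = 1 - ε := by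
      push_cast
      rw [hjval, ← hεval]
      linear_combination hkey
    set iz : ZMod p := 1 - (((B : ZMod p)) - ε) with hiz
    have hival : ((iz.val : ℕ) : ZMod p) = iz := ZMod.natCast_rightInverse iz
    have hGP2 := good_op2 hz htc hGP1 iz.val 0
    refine ⟨_, _, _, _, hGP2, hA1, ?_⟩
    push_cast
    push_cast at hA1
    rw [hjval, ← hεval] at hA1
    rw [hjval, hival, ← hεval]
    linear_combination iz * hA1 + hiz
  suffices hfin : ∃ (x y : G) (CV : ℤ), (CV = 0 ∨ CV = 1) ∧ GoodPair p m t₁ x y CV CV by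
    obtain ⟨x, y, CV, hCV, hGP⟩ := hfin
    obtain ⟨hgen, hxy, hxp, hyp⟩ := hGP
    refine ⟨x, y, t₁, m, hm1, ?_, hcent_t, horder_t, ?_, ?_⟩
    · rw [eq_top_iff, ← hgen]
      refine sup_le ?_ ?_
      · refine Subgroup.closure_mono ?_
        intro g hg
        rcases hg with rfl | hg
        · simp
        · rcases hg with rfl; simp
      · rw [hcent_t]
        exact Subgroup.zpowers_le.mpr (Subgroup.subset_closure (by simp))
    · have h1 : ⁅x⁻¹, y⁻¹⁆ = x⁻¹ * y⁻¹ * x * y := by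
        rw [commutatorElement_def, inv_inv, inv_inv]
      rw [← h1, comm_inv_inv hz, hxy]
    · rcases hCV with rfl | rfl
      · left; constructor <;> simp [hxp, hyp]
      · right; constructor <;> simp [hxp, hyp]
  by_cases hcase : ((A₀ : ZMod p)) = -ε ∧ ((B₀ : ZMod p)) = ε
  · by_cases heps : ε = 0
    · obtain ⟨x', y', h⟩ := finalize a b A₀ B₀ 0 0 hGP0
        (by push_cast; rw [hcase.1, heps, neg_zero])
        (by push_cast; rw [hcase.2, heps])
      exact ⟨x', y', 0, Or.inl rfl, h⟩
    · have hp2 : p = 2 := by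
        rcases hε01 with h | h
        · exact absurd h heps
        · exact h
      have hεone : ε = 1 := by
        rcases zmod_two_cases hp2 ε with h | h
        · exact absurd h heps
        · exact h
      obtain ⟨x', y', h⟩ := finalize a b A₀ B₀ 1 1 hGP0
        (by push_cast; rw [hcase.1, hnegeps, hεone])
        (by push_cast; rw [hcase.2, hεone])
      exact ⟨x', y', 1, Or.inr rfl, h⟩
  · have hstart : ∃ x y A B, GoodPair p m t₁ x y A B ∧ ((B : ℤ) : ZMod p) - ε ≠ 0 := by
      by_cases hB : ((B₀ : ZMod p)) = ε
      · have hA : ¬ ((A₀ : ZMod p)) = -ε := fun h => hcase ⟨h, hB⟩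
        refine ⟨b⁻¹, a, -B₀, A₀, good_op3 hz htc hGP0, ?_⟩
        intro h0
        rw [sub_eq_zero] at h0
        exact hA (by rw [h0, hnegeps])
      · exact ⟨a, b, A₀, B₀, hGP0, sub_ne_zero.mpr hB⟩
    obtain ⟨x, y, A, B, hGP, hBne⟩ := hstart
    obtain ⟨x', y', A', B', hGP', hA', hB'⟩ := steer x y A B hGP hBne
    by_cases heps : ε = 0
    · obtain ⟨x'', y'', h⟩ := finalize x' y' A' B' 1 1 hGP'
        (by push_cast; rw [hA', heps, sub_zero])
        (by push_cast; rw [hB', heps, add_zero])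
      exact ⟨x'', y'', 1, Or.inr rfl, h⟩
    · have hp2 : p = 2 := by
        rcases hε01 with h | h
        · exact absurd h heps
        · exact h
      have hεone : ε = 1 := by
        rcases zmod_two_cases hp2 ε with h | h
        · exact absurd h heps
        · exact h
      have honeone : (1 : ZMod p) + 1 = 0 := by
        rw [← hεone]
        nth_rewrite 1 [← hnegeps]
        exact neg_add_cancel ε
      obtain ⟨x'', y'', h⟩ := finalize x' y' A' B' 0 0 hGP'
        (by push_cast; rw [hA', hεone, sub_self])
        (by push_cast; rw [hB', hεone, honeone])
      exact ⟨x'', y'', 0, Or.inl rfl, h⟩
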